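/- For β ≠ 0 and c > 0, the function s ↦ 1 + Φ(β/s − c) − Φ(β/s + c) defined for s > 0 is non-increasing in s, where Φ is the standard normal CDF with density φ. -/
import Mathlib


open MeasureTheory ProbabilityTheory Set

lemma gaussianPDFReal_anti {x y : ℝ} (h : x ^ 2 ≤ y ^ 2) :
    gaussianPDFReal 0 1 y ≤ gaussianPDFReal 0 1 x := by
  unfold gaussianPDFReal
  simp only [sub_zero, NNReal.coe_one, mul_one]
  gcongr

lemma Phi_diff_eq (Φ : ℝ → ℝ) (hΦ : ∀ x, Φ x = ((gaussianReal 0 1) (Set.Iic x)).toReal)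
    (a b : ℝ) : Φ b - Φ a = ∫ x in a..b, gaussianPDFReal 0 1 x := by
  have hint := integrable_gaussianPDFReal 0 1
  have h : ∀ x, Φ x = ∫ t in Iic x, gaussianPDFReal 0 1 t := by
    intro x
    rw [hΦ, gaussianReal_apply_eq_integral 0 one_ne_zero,
      ENNReal.toReal_ofReal
        (setIntegral_nonneg measurableSet_Iic fun t _ => gaussianPDFReal_nonneg 0 1 t)]
  rw [h, h, intervalIntegral.integral_Iic_sub_Iic hint.integrableOn hint.integrableOn]

/-- The power `s ↦ 1 + Φ(β/s − c) − Φ(β/s + c)` of the two-sided z-test is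
non-increasing in the standard error `s > 0`, for `β ≠ 0` and `c > 0`. -/
theorem power_antitone_in_standard_error
    (β c : ℝ) (hβ : β ≠ 0) (hc : 0 < c)
    (Φ : ℝ → ℝ) (hΦ : ∀ x, Φ x = ((gaussianReal 0 1) (Set.Iic x)).toReal) :
    AntitoneOn (fun s : ℝ => 1 + Φ (β / s - c) - Φ (β / s + c)) (Ioi (0:ℝ)) := by
  intro s₁ hs₁ s₂ hs₂ h12
  simp only [mem_Ioi] at hs₁ hs₂
  set t₁ := β / s₁ with ht₁
  set t₂ := β / s₂ with ht₂
  simp only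
  have hint := integrable_gaussianPDFReal 0 1
  have hint' : Integrable (fun x => gaussianPDFReal 0 1 (x + 2 * c)) :=
    hint.comp_add_right (2 * c)
  -- suffices : Φ (t₂ - c) - Φ (t₁ - c) ≤ Φ (t₂ + c) - Φ (t₁ + c)
  have key : Φ (t₂ - c) - Φ (t₁ - c) ≤ Φ (t₂ + c) - Φ (t₁ + c) := by
    rw [Phi_diff_eq Φ hΦ, Phi_diff_eq Φ hΦ]
    have htrans : (∫ x in (t₁ + c)..(t₂ + c), gaussianPDFReal 0 1 x)
        = ∫ x in (t₁ - c)..(t₂ - c), gaussianPDFReal 0 1 (x + 2 * c) := by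
      rw [intervalIntegral.integral_comp_add_right]
      ring_nf
    rw [htrans]
    rcases lt_or_gt_of_ne hβ with hneg | hpos
    · -- β < 0 : t₁ ≤ t₂ < 0
      have h1 : t₁ ≤ t₂ := by
        rw [ht₁, ht₂, div_le_div_iff₀ hs₁ hs₂]
        nlinarith
      have h2 : t₂ < 0 := div_neg_of_neg_of_pos hneg hs₂
      apply intervalIntegral.integral_mono_on (by linarith)
        hint.intervalIntegrable hint'.intervalIntegrable
      intro x hx
      apply gaussianPDFReal_anti
      have hxu : x ≤ t₂ - c := hx.2
      nlinarith [hc.le]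
    · -- β > 0 : 0 < t₂ ≤ t₁, so t₂ - c ≤ t₁ - c, reversed interval
      have h1 : t₂ ≤ t₁ := by
        rw [ht₁, ht₂, div_le_div_iff₀ (by linarith) hs₁]
        nlinarith
      have h2 : 0 < t₂ := div_pos hpos hs₂
      rw [intervalIntegral.integral_symm (t₂ - c) (t₁ - c),
        intervalIntegral.integral_symm (t₂ - c) (t₁ - c), neg_le_neg_iff]
      apply intervalIntegral.integral_mono_on (by linarith)
        hint'.intervalIntegrable hint.intervalIntegrable
      intro x hx
      apply gaussianPDFReal_anti
      have hxl : t₂ - c ≤ x := hx.1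
      nlinarith [hc.le]
  linarith
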